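/- For every compactum X and every capacity ν on X, the function κX(ν) defined on closed sets by κX(ν)(F) = 1 − ν(X ∖ F) (the value of ν on the open complement taken via the sup-extension) is again a capacity; the resulting map κX: MX → MX is a homeomorphism and an involution; and ν is a necessity capacity if and only if κX(ν) is a possibility capacity. -/

import Mathlib

open Set TopologicalSpace

universe u v

/-- A (upper-semicontinuous) capacity on a topological space `X`:
a normalized monotone set function on the closed subsets, upper semicontinuous
in the sense of Zarichnyi–Nykyforchyn. -/
structure Capacity (X : Type u) [TopologicalSpace X] : Type u where
  toFun : Closeds X → ℝ
  empty' : toFun ⊥ = 0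
  univ' : toFun ⊤ = 1
  mono' : ∀ F G : Closeds X, F ≤ G → toFun F ≤ toFun G
  usc' : ∀ (F : Closeds X) (a : ℝ), toFun F < a →
    ∃ O : Set X, IsOpen O ∧ (F : Set X) ⊆ O ∧ ∀ B : Closeds X, (B : Set X) ⊆ O → toFun B < a

namespace Capacity

variable {X : Type u} [TopologicalSpace X]

/-- Value of a capacity on (the closure of) an arbitrary set; on closed sets this is
the value of the capacity. -/
def cval (ν : Capacity X) (A : Set X) : ℝ := ν.toFun ⟨closure A, isClosed_closure⟩

/-- The sup-extension of a capacity to open sets: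
`ν(U) = sup {ν K : K closed, K ⊆ U}`. -/
noncomputable def oval (ν : Capacity X) (U : Set X) : ℝ :=
  sSup {r : ℝ | ∃ K : Closeds X, (K : Set X) ⊆ U ∧ ν.toFun K = r}

end Capacity

/-- The topology on the space `MX` of capacities, generated by the subbase
`O₋(F,a) = {c : c(F) < a}` (`F` closed) and `O₊(U,a) = {c : c(U) > a}` (`U` open). -/
instance capacityTopology (X : Type u) [TopologicalSpace X] : TopologicalSpace (Capacity X) :=
  TopologicalSpace.generateFrom
    ({S | ∃ (F : Closeds X) (a : ℝ), a ∈ Icc (0:ℝ) 1 ∧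
        S = {c : Capacity X | c.toFun F < a}} ∪
     {S | ∃ U : Set X, IsOpen U ∧ ∃ a ∈ Icc (0:ℝ) 1,
        S = {c : Capacity X | a < c.oval U}})

/-- A possibility capacity: `ν(A ∪ B) = max (ν A) (ν B)` on closed sets. -/
def IsPossibility {X : Type u} [TopologicalSpace X] (ν : Capacity X) : Prop :=
  ∀ A B : Closeds X, ν.toFun (A ⊔ B) = max (ν.toFun A) (ν.toFun B)

/-- A necessity capacity: `ν(A ∩ B) = min (ν A) (ν B)` on closed sets. -/
def IsNecessity {X : Type u} [TopologicalSpace X] (ν : Capacity X) : Prop :=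
  ∀ A B : Closeds X, ν.toFun (A ⊓ B) = min (ν.toFun A) (ν.toFun B)

/-- A triangular norm on `[0,1]`. -/
structure Tnorm : Type where
  toFun : ℝ → ℝ → ℝ
  mem' : ∀ s ∈ Icc (0:ℝ) 1, ∀ t ∈ Icc (0:ℝ) 1, toFun s t ∈ Icc (0:ℝ) 1
  comm' : ∀ s ∈ Icc (0:ℝ) 1, ∀ t ∈ Icc (0:ℝ) 1, toFun s t = toFun t s
  assoc' : ∀ s ∈ Icc (0:ℝ) 1, ∀ t ∈ Icc (0:ℝ) 1, ∀ r ∈ Icc (0:ℝ) 1,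
    toFun (toFun s t) r = toFun s (toFun t r)
  mono' : ∀ s₁ ∈ Icc (0:ℝ) 1, ∀ s₂ ∈ Icc (0:ℝ) 1, ∀ t₁ ∈ Icc (0:ℝ) 1, ∀ t₂ ∈ Icc (0:ℝ) 1,
    s₁ ≤ s₂ → t₁ ≤ t₂ → toFun s₁ t₁ ≤ toFun s₂ t₂
  one' : ∀ s ∈ Icc (0:ℝ) 1, toFun s 1 = s

/-- Continuity of a t-norm (on the unit square). -/
def Tnorm.Cont (star : Tnorm) : Prop :=
  ContinuousOn (fun q : ℝ × ℝ => star.toFun q.1 q.2) (Icc 0 1 ×ˢ Icc 0 1)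

/-- The t-normed (fuzzy) integral `∫^{∨∗} f dν = sup { ν(f⁻¹[t,1]) ∗ t : t ∈ [0,1] }`. -/
noncomputable def tInt {X : Type u} [TopologicalSpace X] (star : Tnorm) (ν : Capacity X) (f : X → ℝ) : ℝ :=
  sSup {r : ℝ | ∃ t ∈ Icc (0:ℝ) 1, r = star.toFun (ν.cval (f ⁻¹' Icc t 1)) t}
namespace Capacity

variable {X : Type u} [TopologicalSpace X]

lemma toFun_nonneg (ν : Capacity X) (F : Closeds X) : 0 ≤ ν.toFun F :=
  ν.empty' ▸ ν.mono' ⊥ F bot_le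

lemma toFun_le_one (ν : Capacity X) (F : Closeds X) : ν.toFun F ≤ 1 :=
  ν.univ' ▸ ν.mono' F ⊤ le_top

lemma ovalSet_nonempty (ν : Capacity X) (U : Set X) :
    {r : ℝ | ∃ K : Closeds X, (K : Set X) ⊆ U ∧ ν.toFun K = r}.Nonempty :=
  ⟨ν.toFun ⊥, ⊥, by simp, rfl⟩

lemma ovalSet_bddAbove (ν : Capacity X) (U : Set X) :
    BddAbove {r : ℝ | ∃ K : Closeds X, (K : Set X) ⊆ U ∧ ν.toFun K = r} :=
  ⟨1, by rintro r ⟨K, -, rfl⟩; exact ν.toFun_le_one K⟩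

lemma le_oval (ν : Capacity X) {K : Closeds X} {U : Set X} (h : (K : Set X) ⊆ U) :
    ν.toFun K ≤ ν.oval U :=
  le_csSup (ν.ovalSet_bddAbove U) ⟨K, h, rfl⟩

lemma oval_le {ν : Capacity X} {U : Set X} {b : ℝ}
    (h : ∀ K : Closeds X, (K : Set X) ⊆ U → ν.toFun K ≤ b) : ν.oval U ≤ b :=
  csSup_le (ovalSet_nonempty ν U) (by rintro r ⟨K, hK, rfl⟩; exact h K hK)

lemma exists_lt_oval {ν : Capacity X} {U : Set X} {a : ℝ} (h : a < ν.oval U) :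
    ∃ K : Closeds X, (K : Set X) ⊆ U ∧ a < ν.toFun K := by
  obtain ⟨r, ⟨K, hK, rfl⟩, hr⟩ := exists_lt_of_lt_csSup (ovalSet_nonempty ν U) h
  exact ⟨K, hK, hr⟩

lemma oval_mono (ν : Capacity X) {U V : Set X} (h : U ⊆ V) : ν.oval U ≤ ν.oval V :=
  oval_le fun K hK => ν.le_oval (hK.trans h)

protected lemma ext : ∀ {ν μ : Capacity X}, ν.toFun = μ.toFun → ν = μ
  | ⟨_, _, _, _, _⟩, ⟨_, _, _, _, _⟩, rfl => rfl

/-- The dual (conjugate) capacity. -/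
noncomputable def dual (ν : Capacity X) : Capacity X where
  toFun F := 1 - ν.oval (↑F)ᶜ
  empty' := by
    have hle : ν.oval ((↑(⊥ : Closeds X) : Set X))ᶜ ≤ 1 := oval_le fun K _ => ν.toFun_le_one K
    have hge : (1 : ℝ) ≤ ν.oval ((↑(⊥ : Closeds X) : Set X))ᶜ :=
      ν.univ' ▸ ν.le_oval (K := ⊤) (by simp)
    linarith
  univ' := by
    have h0 : ν.oval ((↑(⊤ : Closeds X) : Set X))ᶜ ≤ 0 := by
      apply oval_le
      intro K hK
      have hK' : (K : Set X) = ∅ := by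
        simpa [subset_empty_iff] using hK
      have : K = ⊥ := SetLike.ext' (by simp [hK'])
      rw [this, ν.empty']
    have h0' : (0 : ℝ) ≤ ν.oval ((↑(⊤ : Closeds X) : Set X))ᶜ :=
      ν.empty' ▸ ν.le_oval (K := ⊥) (by simp)
    linarith
  mono' := fun F G h => by
    have := ν.oval_mono (compl_subset_compl.mpr (show (F : Set X) ⊆ G from h))
    linarith
  usc' := fun F a ha => by
    have h1 : 1 - a < ν.oval (↑F)ᶜ := by linarith
    obtain ⟨K, hKF, hK⟩ := exists_lt_oval h1
    refine ⟨(↑K)ᶜ, K.isClosed.isOpen_compl, subset_compl_comm.mp hKF, fun B hB => ?_⟩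
    have h2 : ν.toFun K ≤ ν.oval (↑B)ᶜ := ν.le_oval (subset_compl_comm.mp hB)
    linarith

@[simp] lemma dual_toFun (ν : Capacity X) (F : Closeds X) :
    (dual ν).toFun F = 1 - ν.oval (↑F)ᶜ := rfl

lemma dual_oval_compl (ν : Capacity X) (F : Closeds X) :
    (dual ν).oval (↑F)ᶜ = 1 - ν.toFun F := by
  apply le_antisymm
  · apply oval_le
    intro K hK
    have h1 : ν.toFun F ≤ ν.oval (↑K)ᶜ := ν.le_oval (subset_compl_comm.mp hK)
    rw [dual_toFun]
    linarith
  · by_contra h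
    push_neg at h
    set b := (dual ν).oval (↑F)ᶜ with hb
    set a := (ν.toFun F + (1 - b)) / 2 with ha
    obtain ⟨O, hO, hFO, hB⟩ := ν.usc' F a (by rw [ha]; linarith)
    have hovO : ν.oval O ≤ a := oval_le fun B hB' => (hB B hB').le
    have hK : (dual ν).toFun ⟨Oᶜ, hO.isClosed_compl⟩ ≤ b :=
      le_oval (dual ν) (show Oᶜ ⊆ (↑F)ᶜ from compl_subset_compl.mpr hFO)
    rw [dual_toFun] at hK
    simp only [Closeds.coe_mk, compl_compl] at hK
    linarith

lemma dual_dual (ν : Capacity X) : dual (dual ν) = ν := by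
  apply Capacity.ext
  funext F
  rw [dual_toFun, dual_oval_compl]
  ring

lemma oval_inter {ν : Capacity X} (h : IsNecessity ν) (U V : Set X) :
    ν.oval (U ∩ V) = min (ν.oval U) (ν.oval V) := by
  apply le_antisymm
  · exact le_min (oval_mono ν inter_subset_left) (oval_mono ν inter_subset_right)
  · apply le_of_forall_lt
    intro c hc
    obtain ⟨K, hKU, hK⟩ := exists_lt_oval (lt_of_lt_of_le hc (min_le_left _ _))
    obtain ⟨L, hLV, hL⟩ := exists_lt_oval (lt_of_lt_of_le hc (min_le_right _ _))
    have hsub : (↑(K ⊓ L) : Set X) ⊆ U ∩ V := by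
      rw [Closeds.coe_inf]
      exact inter_subset_inter hKU hLV
    calc c < ν.toFun (K ⊓ L) := by rw [h K L]; exact lt_min hK hL
      _ ≤ ν.oval (U ∩ V) := ν.le_oval hsub

lemma oval_union [NormalSpace X] {μ : Capacity X} (h : IsPossibility μ) {U V : Set X}
    (hU : IsOpen U) (hV : IsOpen V) : μ.oval (U ∪ V) = max (μ.oval U) (μ.oval V) := by
  apply le_antisymm
  · apply oval_le
    intro K hK
    have hdisj : Disjoint ((K : Set X) \ U) ((K : Set X) \ V) := by
      rw [disjoint_left]
      rintro x ⟨hxK, hxU⟩ ⟨-, hxV⟩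
      rcases hK hxK with h1 | h1
      exacts [hxU h1, hxV h1]
    obtain ⟨W₁, W₂, hW₁, hW₂, h₁, h₂, hd⟩ :=
      NormalSpace.normal _ _ (K.isClosed.sdiff hU) (K.isClosed.sdiff hV) hdisj
    set K₁ : Closeds X := ⟨(K : Set X) \ W₁, K.isClosed.sdiff hW₁⟩
    set K₂ : Closeds X := ⟨(K : Set X) \ W₂, K.isClosed.sdiff hW₂⟩
    have hK₁ : (K₁ : Set X) ⊆ U := by
      rintro x ⟨hxK, hxW⟩
      by_contra hxU
      exact hxW (h₁ ⟨hxK, hxU⟩)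
    have hK₂ : (K₂ : Set X) ⊆ V := by
      rintro x ⟨hxK, hxW⟩
      by_contra hxV
      exact hxW (h₂ ⟨hxK, hxV⟩)
    have hKeq : K = K₁ ⊔ K₂ := by
      apply SetLike.ext'
      rw [Closeds.coe_sup]
      ext x
      simp only [Closeds.coe_mk, mem_union, mem_diff, K₁, K₂]
      constructor
      · intro hx
        by_cases hxW : x ∈ W₁
        · exact Or.inr ⟨hx, fun hxW₂ => disjoint_left.mp hd hxW hxW₂⟩
        · exact Or.inl ⟨hx, hxW⟩
      · rintro (⟨hx, -⟩ | ⟨hx, -⟩) <;> exact hx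
    calc μ.toFun K = max (μ.toFun K₁) (μ.toFun K₂) := by rw [hKeq, h K₁ K₂]
      _ ≤ max (μ.oval U) (μ.oval V) := max_le_max (μ.le_oval hK₁) (μ.le_oval hK₂)
  · exact max_le (oval_mono μ subset_union_left) (oval_mono μ subset_union_right)

lemma isPossibility_dual {ν : Capacity X} (h : IsNecessity ν) : IsPossibility (dual ν) := by
  intro A B
  simp only [dual_toFun, Closeds.coe_sup, compl_union, oval_inter h]
  rcases le_total (ν.oval (↑A)ᶜ) (ν.oval (↑B)ᶜ) with hle | hle
  · rw [min_eq_left hle, max_eq_left (by linarith)]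
  · rw [min_eq_right hle, max_eq_right (by linarith)]

lemma isNecessity_dual [NormalSpace X] {μ : Capacity X} (h : IsPossibility μ) :
    IsNecessity (dual μ) := by
  intro A B
  simp only [dual_toFun, Closeds.coe_inf, compl_inter,
    oval_union h A.isClosed.isOpen_compl B.isClosed.isOpen_compl]
  rcases le_total (μ.oval (↑A)ᶜ) (μ.oval (↑B)ᶜ) with hle | hle
  · rw [max_eq_right hle, min_eq_right (by linarith)]
  · rw [max_eq_left hle, min_eq_left (by linarith)]

lemma continuous_dual [NormalSpace X] : Continuous (dual : Capacity X → Capacity X) := by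
  apply continuous_generateFrom_iff.mpr
  rintro s (⟨F, a, ha, rfl⟩ | ⟨U, hU, a, ha, rfl⟩)
  · have heq : dual ⁻¹' {c : Capacity X | c.toFun F < a} =
        {c : Capacity X | 1 - a < c.oval (↑F)ᶜ} := by
      ext c
      simp only [mem_preimage, mem_setOf_eq, dual_toFun]
      constructor <;> intro <;> linarith
    rw [heq]
    exact isOpen_generateFrom_of_mem
      (Or.inr ⟨(↑F)ᶜ, F.isClosed.isOpen_compl, 1 - a,
        ⟨by linarith [ha.2], by linarith [ha.1]⟩, rfl⟩)
  · have heq : dual ⁻¹' {c : Capacity X | a < c.oval U} =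
        ⋃ F ∈ {F : Closeds X | closure ((F : Set X)ᶜ) ⊆ U},
          {c : Capacity X | c.toFun F < 1 - a} := by
      ext c
      simp only [mem_preimage, mem_setOf_eq, mem_iUnion, exists_prop]
      constructor
      · intro hc
        obtain ⟨K, hKU, hK⟩ := exists_lt_oval hc
        rw [dual_toFun] at hK
        obtain ⟨W, hW, hKW, hWU⟩ := normal_exists_closure_subset K.isClosed hU hKU
        refine ⟨⟨Wᶜ, hW.isClosed_compl⟩, ?_, ?_⟩
        · show closure (Wᶜᶜ) ⊆ U
          rw [compl_compl]
          exact hWU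
        · have h1 : c.toFun ⟨Wᶜ, hW.isClosed_compl⟩ ≤ c.oval (↑K)ᶜ :=
            c.le_oval (show Wᶜ ⊆ (↑K)ᶜ from compl_subset_compl.mpr hKW)
          linarith
      · rintro ⟨F, hFU, hF⟩
        have hoval : c.oval (closure ((F : Set X)ᶜ))ᶜ ≤ c.toFun F := by
          apply oval_le
          intro L hL
          refine c.mono' L F ?_
          have hsub : (closure ((F : Set X)ᶜ))ᶜ ⊆ (F : Set X) := by
            have := compl_subset_compl.mpr (subset_closure (s := ((F : Set X)ᶜ)))
            rwa [compl_compl] at this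
          exact hL.trans hsub
        have h1 : a < (dual c).toFun ⟨closure ((F : Set X)ᶜ), isClosed_closure⟩ := by
          rw [dual_toFun]
          simp only [Closeds.coe_mk]
          linarith
        exact lt_of_lt_of_le h1 ((dual c).le_oval hFU)
    rw [heq]
    refine isOpen_biUnion fun F hF => ?_
    exact isOpen_generateFrom_of_mem
      (Or.inl ⟨F, 1 - a, ⟨by linarith [ha.2], by linarith [ha.1]⟩, rfl⟩)

end Capacity

/-- the dual (conjugate) capacity `κX(ν)(F) = 1 − ν(X ∖ F)` (the value on
the open complement being the sup-extension) is again a capacity; `κX : MX → MX` is a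
homeomorphism and an involution; and `ν` is a necessity capacity iff `κX(ν)` is a
possibility capacity. -/
theorem dual_capacity (X : Type u) [TopologicalSpace X] [CompactSpace X] [T2Space X] :
    ∃ κ : Capacity X → Capacity X,
      (∀ (ν : Capacity X) (F : Set X), IsClosed F → (κ ν).cval F = 1 - ν.oval Fᶜ) ∧
      IsHomeomorph κ ∧
      (∀ ν : Capacity X, κ (κ ν) = ν) ∧
      (∀ ν : Capacity X, IsNecessity ν ↔ IsPossibility (κ ν)) := by
  have hinv : Function.Involutive (Capacity.dual : Capacity X → Capacity X) :=
    Capacity.dual_dual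
  refine ⟨Capacity.dual, ?_, ?_, Capacity.dual_dual, ?_⟩
  · intro ν F hF
    have hc : (⟨closure F, isClosed_closure⟩ : Closeds X) = ⟨F, hF⟩ :=
      SetLike.ext' (by simpa using hF.closure_eq)
    show (Capacity.dual ν).toFun ⟨closure F, isClosed_closure⟩ = _
    rw [hc, Capacity.dual_toFun]
    rfl
  · refine ⟨Capacity.continuous_dual, ?_, hinv.bijective⟩
    intro s hs
    rw [Set.image_eq_preimage_of_inverse hinv hinv]
    exact hs.preimage Capacity.continuous_dual
  · intro ν
    constructor
    · exact Capacity.isPossibility_dual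
    · intro h
      have := Capacity.isNecessity_dual h
      rwa [Capacity.dual_dual] at this
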